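/- Let n be a positive integer and a ∈ (0, n). Then the function b ↦ L_{a,b,n} := 2^a Γ((n−b+a)/4) Γ((n+b+a)/4) / (Γ((n+b−a)/4) Γ((n−b−a)/4)) is strictly monotone decreasing on the interval [0, n−a), where Γ is the real Gamma function. -/
import Mathlib

open Real Filter Finset Topology

private lemma step_ineq {d u x y v : ℝ} (hd : 0 < d) (hu : 0 < u) (hux : u < x)
    (hxy : x ≤ y) (hsum : u + v = x + y) {r : ℝ} (hr : 0 ≤ r) :
    (u + r) * (v + r) * (x + d + r) * (y + d + r)
      ≤ (x + r) * (y + r) * (u + d + r) * (v + d + r) := by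
  have hv : v = x + y - u := by linarith
  subst hv
  have key : (x + r) * (y + r) * (u + d + r) * (x + y - u + d + r)
      - (u + r) * (x + y - u + r) * (x + d + r) * (y + d + r)
      = (x - u) * (y - u) * d * (x + y + 2 * r + d) := by ring
  have h1 : 0 < x - u := by linarith
  have h2 : 0 < y - u := by linarith
  have h3 : 0 < x + y + 2 * r + d := by nlinarith
  nlinarith [mul_pos (mul_pos (mul_pos h1 h2) hd) h3]

private lemma prod_key {d u x y v : ℝ} (hd : 0 < d) (hu : 0 < u) (hux : u < x)
    (hxy : x ≤ y) (hsum : u + v = x + y) (n : ℕ) :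
    (x * y * (u + d) * (v + d)) *
      ∏ j ∈ Finset.range (n + 1), ((u + j) * (v + j) * (x + d + j) * (y + d + j))
    ≤ (u * v * (x + d) * (y + d)) *
      ∏ j ∈ Finset.range (n + 1), ((x + j) * (y + j) * (u + d + j) * (v + d + j)) := by
  have hx : 0 < x := hu.trans hux
  have hy : 0 < y := hx.trans_le hxy
  have hv : 0 < v := by linarith
  rw [Finset.prod_range_succ', Finset.prod_range_succ']
  simp only [Nat.cast_zero, add_zero]
  have hP : (∏ j ∈ Finset.range n, ((u + (j + 1 : ℕ)) * (v + (j + 1 : ℕ)) *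
        (x + d + (j + 1 : ℕ)) * (y + d + (j + 1 : ℕ))))
      ≤ ∏ j ∈ Finset.range n, ((x + (j + 1 : ℕ)) * (y + (j + 1 : ℕ)) *
        (u + d + (j + 1 : ℕ)) * (v + d + (j + 1 : ℕ))) := by
    apply Finset.prod_le_prod
    · intro j _
      have hj : (0:ℝ) ≤ ((j + 1 : ℕ) : ℝ) := by positivity
      apply mul_nonneg; apply mul_nonneg; apply mul_nonneg
      all_goals nlinarith
    · intro j _
      exact step_ineq hd hu hux hxy hsum (by positivity)
  have hCC : (0:ℝ) ≤ (x * y * (u + d) * (v + d)) * (u * v * (x + d) * (y + d)) := by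
    have h1 : 0 < u + d := by linarith
    have h2 : 0 < v + d := by linarith
    have h3 : 0 < x + d := by linarith
    have h4 : 0 < y + d := by linarith
    nlinarith [mul_pos (mul_pos (mul_pos hx hy) h1) h2, mul_pos (mul_pos (mul_pos hu hv) h3) h4]
  calc (x * y * (u + d) * (v + d)) *
        ((∏ j ∈ Finset.range n, ((u + (j + 1 : ℕ)) * (v + (j + 1 : ℕ)) *
          (x + d + (j + 1 : ℕ)) * (y + d + (j + 1 : ℕ)))) * (u * v * (x + d) * (y + d)))
      = ((x * y * (u + d) * (v + d)) * (u * v * (x + d) * (y + d))) *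
        (∏ j ∈ Finset.range n, ((u + (j + 1 : ℕ)) * (v + (j + 1 : ℕ)) *
          (x + d + (j + 1 : ℕ)) * (y + d + (j + 1 : ℕ)))) := by ring
    _ ≤ ((x * y * (u + d) * (v + d)) * (u * v * (x + d) * (y + d))) *
        (∏ j ∈ Finset.range n, ((x + (j + 1 : ℕ)) * (y + (j + 1 : ℕ)) *
          (u + d + (j + 1 : ℕ)) * (v + d + (j + 1 : ℕ)))) :=
        mul_le_mul_of_nonneg_left hP hCC
    _ = (u * v * (x + d) * (y + d)) *
        ((∏ j ∈ Finset.range n, ((x + (j + 1 : ℕ)) * (y + (j + 1 : ℕ)) *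
          (u + d + (j + 1 : ℕ)) * (v + d + (j + 1 : ℕ)))) * (x * y * (u + d) * (v + d))) := by
        ring

set_option maxHeartbeats 1000000 in
private lemma ratio_lt {d u x y v : ℝ} (hd : 0 < d) (hu : 0 < u) (hux : u < x)
    (hxy : x ≤ y) (hsum : u + v = x + y) :
    Real.Gamma (u + d) * Real.Gamma (v + d) / (Real.Gamma u * Real.Gamma v)
      < Real.Gamma (x + d) * Real.Gamma (y + d) / (Real.Gamma x * Real.Gamma y) := by
  have hx : 0 < x := hu.trans hux
  have hy : 0 < y := hx.trans_le hxy
  have hv : 0 < v := by linarith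
  set C1 := x * y * (u + d) * (v + d) with hC1
  set C2 := u * v * (x + d) * (y + d) with hC2
  have hC1pos : 0 < C1 := by
    apply mul_pos (mul_pos (mul_pos hx hy) (by linarith)) (by linarith)
  have hC2pos : 0 < C2 := by
    apply mul_pos (mul_pos (mul_pos hu hv) (by linarith)) (by linarith)
  have hC21 : C2 < C1 := by
    have hveq : v = x + y - u := by linarith
    have key : C1 - C2 = (x - u) * (y - u) * d * (x + y + d) := by
      rw [hC1, hC2, hveq]; ring
    nlinarith [mul_pos (mul_pos (mul_pos (show (0:ℝ) < x - u by linarith)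
      (show (0:ℝ) < y - u by linarith)) hd) (show (0:ℝ) < x + y + d by linarith)]
  -- per-n inequality
  have key : ∀ᶠ n : ℕ in atTop,
      C1 * (Real.GammaSeq (u + d) n * Real.GammaSeq (v + d) n *
        Real.GammaSeq x n * Real.GammaSeq y n)
      ≤ C2 * (Real.GammaSeq (x + d) n * Real.GammaSeq (y + d) n *
        Real.GammaSeq u n * Real.GammaSeq v n) := by
    filter_upwards [eventually_ge_atTop 1] with n hn
    have hN : (0:ℝ) < (n : ℝ) := by exact_mod_cast hn
    have hF : (0:ℝ) < (n.factorial : ℝ) := by exact_mod_cast n.factorial_pos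
    have Ppos : ∀ w : ℝ, 0 < w → 0 < ∏ j ∈ Finset.range (n + 1), (w + (j : ℝ)) := by
      intro w hw
      apply Finset.prod_pos
      intro j _
      positivity
    have hPu := Ppos u hu
    have hPv := Ppos v hv
    have hPx := Ppos x hx
    have hPy := Ppos y hy
    have hPud := Ppos (u + d) (by linarith)
    have hPvd := Ppos (v + d) (by linarith)
    have hPxd := Ppos (x + d) (by linarith)
    have hPyd := Ppos (y + d) (by linarith)
    have eqL : C1 * (Real.GammaSeq (u + d) n * Real.GammaSeq (v + d) n *
        Real.GammaSeq x n * Real.GammaSeq y n)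
        = C1 * ((n:ℝ) ^ (u + d) * (n:ℝ) ^ (v + d) * (n:ℝ) ^ x * (n:ℝ) ^ y *
            (n.factorial : ℝ) ^ 4)
          / ((∏ j ∈ Finset.range (n + 1), (u + d + (j:ℝ))) *
             (∏ j ∈ Finset.range (n + 1), (v + d + (j:ℝ))) *
             (∏ j ∈ Finset.range (n + 1), (x + (j:ℝ))) *
             (∏ j ∈ Finset.range (n + 1), (y + (j:ℝ)))) := by
      simp only [Real.GammaSeq]; ring
    have eqR : C2 * (Real.GammaSeq (x + d) n * Real.GammaSeq (y + d) n *
        Real.GammaSeq u n * Real.GammaSeq v n)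
        = C2 * ((n:ℝ) ^ (x + d) * (n:ℝ) ^ (y + d) * (n:ℝ) ^ u * (n:ℝ) ^ v *
            (n.factorial : ℝ) ^ 4)
          / ((∏ j ∈ Finset.range (n + 1), (x + d + (j:ℝ))) *
             (∏ j ∈ Finset.range (n + 1), (y + d + (j:ℝ))) *
             (∏ j ∈ Finset.range (n + 1), (u + (j:ℝ))) *
             (∏ j ∈ Finset.range (n + 1), (v + (j:ℝ)))) := by
      simp only [Real.GammaSeq]; ring
    rw [eqL, eqR, div_le_div_iff₀ (by positivity) (by positivity)]
    have hexp : (n:ℝ) ^ (u + d) * (n:ℝ) ^ (v + d) * (n:ℝ) ^ x * (n:ℝ) ^ y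
        = (n:ℝ) ^ (x + d) * (n:ℝ) ^ (y + d) * (n:ℝ) ^ u * (n:ℝ) ^ v := by
      rw [Real.rpow_add hN, Real.rpow_add hN, Real.rpow_add hN, Real.rpow_add hN]
      ring
    rw [hexp]
    have hprod := prod_key hd hu hux hxy hsum n
    have e1 : (∏ j ∈ Finset.range (n + 1), ((u + (j:ℝ)) * (v + (j:ℝ)) *
          (x + d + (j:ℝ)) * (y + d + (j:ℝ))))
        = (∏ j ∈ Finset.range (n + 1), (u + (j:ℝ))) *
          (∏ j ∈ Finset.range (n + 1), (v + (j:ℝ))) *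
          (∏ j ∈ Finset.range (n + 1), (x + d + (j:ℝ))) *
          (∏ j ∈ Finset.range (n + 1), (y + d + (j:ℝ))) := by
      simp only [Finset.prod_mul_distrib]
    have e2 : (∏ j ∈ Finset.range (n + 1), ((x + (j:ℝ)) * (y + (j:ℝ)) *
          (u + d + (j:ℝ)) * (v + d + (j:ℝ))))
        = (∏ j ∈ Finset.range (n + 1), (x + (j:ℝ))) *
          (∏ j ∈ Finset.range (n + 1), (y + (j:ℝ))) *
          (∏ j ∈ Finset.range (n + 1), (u + d + (j:ℝ))) *
          (∏ j ∈ Finset.range (n + 1), (v + d + (j:ℝ))) := by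
      simp only [Finset.prod_mul_distrib]
    rw [e1, e2] at hprod
    have hM : (0:ℝ) ≤ (n:ℝ) ^ (x + d) * (n:ℝ) ^ (y + d) * (n:ℝ) ^ u * (n:ℝ) ^ v *
        (n.factorial : ℝ) ^ 4 := by positivity
    have hfin := mul_le_mul_of_nonneg_left hprod hM
    rw [hC1, hC2]
    linarith [hfin]
  -- pass to the limit
  have hT : Tendsto (fun n => C1 * (Real.GammaSeq (u + d) n * Real.GammaSeq (v + d) n *
      Real.GammaSeq x n * Real.GammaSeq y n)) atTop
      (𝓝 (C1 * (Real.Gamma (u + d) * Real.Gamma (v + d) * Real.Gamma x * Real.Gamma y))) :=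
    tendsto_const_nhds.mul ((((Real.GammaSeq_tendsto_Gamma _).mul
      (Real.GammaSeq_tendsto_Gamma _)).mul (Real.GammaSeq_tendsto_Gamma _)).mul
      (Real.GammaSeq_tendsto_Gamma _))
  have hW : Tendsto (fun n => C2 * (Real.GammaSeq (x + d) n * Real.GammaSeq (y + d) n *
      Real.GammaSeq u n * Real.GammaSeq v n)) atTop
      (𝓝 (C2 * (Real.Gamma (x + d) * Real.Gamma (y + d) * Real.Gamma u * Real.Gamma v))) :=
    tendsto_const_nhds.mul ((((Real.GammaSeq_tendsto_Gamma _).mul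
      (Real.GammaSeq_tendsto_Gamma _)).mul (Real.GammaSeq_tendsto_Gamma _)).mul
      (Real.GammaSeq_tendsto_Gamma _))
  have hlim := le_of_tendsto_of_tendsto hT hW key
  have hGu := Real.Gamma_pos_of_pos hu
  have hGv := Real.Gamma_pos_of_pos hv
  have hGx := Real.Gamma_pos_of_pos hx
  have hGy := Real.Gamma_pos_of_pos hy
  have hGud := Real.Gamma_pos_of_pos (show (0:ℝ) < u + d by linarith)
  have hGvd := Real.Gamma_pos_of_pos (show (0:ℝ) < v + d by linarith)
  have hGxd := Real.Gamma_pos_of_pos (show (0:ℝ) < x + d by linarith)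
  have hGyd := Real.Gamma_pos_of_pos (show (0:ℝ) < y + d by linarith)
  rw [div_lt_div_iff₀ (by positivity) (by positivity)]
  have hWpos : 0 < Real.Gamma (x + d) * Real.Gamma (y + d) * Real.Gamma u * Real.Gamma v := by
    positivity
  nlinarith [mul_lt_mul_of_pos_right hC21 hWpos]

/-- The constant `L_{a,b,n}` is strictly monotone decreasing as a function of
`b` on the interval `[0, n - a)`. -/
theorem LConst_strictAntiOn
    (n : ℕ) (hn : 0 < n) (a : ℝ) (ha : a ∈ Set.Ioo (0 : ℝ) (n : ℝ)) :
    StrictAntiOn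
      (fun b : ℝ =>
        2 ^ a * Real.Gamma (((n : ℝ) - b + a) / 4) * Real.Gamma (((n : ℝ) + b + a) / 4) /
          (Real.Gamma (((n : ℝ) + b - a) / 4) * Real.Gamma (((n : ℝ) - b - a) / 4)))
      (Set.Ico (0 : ℝ) ((n : ℝ) - a)) := by
  obtain ⟨ha0, han⟩ := ha
  intro b1 hb1 b2 hb2 h12
  obtain ⟨hb10, hb1n⟩ := hb1
  obtain ⟨hb20, hb2n⟩ := hb2
  set d : ℝ := a / 2 with hd'
  set u : ℝ := ((n : ℝ) - a - b2) / 4 with hu'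
  set v : ℝ := ((n : ℝ) - a + b2) / 4 with hv'
  set x : ℝ := ((n : ℝ) - a - b1) / 4 with hx'
  set y : ℝ := ((n : ℝ) - a + b1) / 4 with hy'
  have hd : 0 < d := by rw [hd']; linarith
  have hu : 0 < u := by rw [hu']; linarith
  have hux : u < x := by rw [hu', hx']; linarith
  have hxy : x ≤ y := by rw [hx', hy']; linarith
  have hsum : u + v = x + y := by rw [hu', hv', hx', hy']; ring
  have hmain := ratio_lt hd hu hux hxy hsum
  have e2a : ((n : ℝ) - b2 + a) / 4 = u + d := by rw [hu', hd']; ring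
  have e2b : ((n : ℝ) + b2 + a) / 4 = v + d := by rw [hv', hd']; ring
  have e2c : ((n : ℝ) + b2 - a) / 4 = v := by rw [hv']; ring
  have e2d : ((n : ℝ) - b2 - a) / 4 = u := by rw [hu']; ring
  have e1a : ((n : ℝ) - b1 + a) / 4 = x + d := by rw [hx', hd']; ring
  have e1b : ((n : ℝ) + b1 + a) / 4 = y + d := by rw [hy', hd']; ring
  have e1c : ((n : ℝ) + b1 - a) / 4 = y := by rw [hy']; ring
  have e1d : ((n : ℝ) - b1 - a) / 4 = x := by rw [hx']; ring
  simp only [e2a, e2b, e2c, e2d, e1a, e1b, e1c, e1d]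
  have h2a : (0:ℝ) < 2 ^ a := by positivity
  calc (2:ℝ) ^ a * Real.Gamma (u + d) * Real.Gamma (v + d) /
        (Real.Gamma v * Real.Gamma u)
      = 2 ^ a * (Real.Gamma (u + d) * Real.Gamma (v + d) /
        (Real.Gamma u * Real.Gamma v)) := by ring
    _ < 2 ^ a * (Real.Gamma (x + d) * Real.Gamma (y + d) /
        (Real.Gamma x * Real.Gamma y)) := by
        exact mul_lt_mul_of_pos_left hmain h2a
    _ = 2 ^ a * Real.Gamma (x + d) * Real.Gamma (y + d) /
        (Real.Gamma y * Real.Gamma x) := by ring
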